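/- Let W be the lazy random walk on a finite simple connected regular graph G = (V,E). Fix s', r ∈ ℕ with r ≥ s' + 1 and s' ≥ t_mix + 1. Then for all N ∈ ℕ_0 and every starting vertex ρ: P_ρ(for all n ∈ [0,N], W(n) ∉ {W(m) : m ∈ [n+s', n+r]}) ≥ 1 − 2(r−s'+1)(N+1)/#V. In words: with high probability the walk closes no loop whose length lies in the intermediate window [s', r]. -/

import Mathlib

open Finset

variable {V : Type*} [Fintype V] [DecidableEq V] [Nonempty V]

/-- One-step transition kernel of the lazy random walk on `G`:
stay put with probability `1/2`, otherwise move to a uniformly chosen neighbour. -/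
noncomputable def lazyStep (G : SimpleGraph V) [DecidableRel G.Adj] (x y : V) : ℝ :=
  if x = y then 1 / 2 else if G.Adj x y then 1 / (2 * (G.degree x : ℝ)) else 0

/-- `n`-step transition probabilities of the lazy random walk. -/
noncomputable def lazyProb (G : SimpleGraph V) [DecidableRel G.Adj] : ℕ → V → V → ℝ
  | 0, x, y => if x = y then 1 else 0
  | n + 1, x, y => ∑ z : V, lazyStep G x z * lazyProb G n z y

/-- The stationary (degree-biased) distribution `π(x) = deg(x)/(2#E)`. -/
noncomputable def statDist (G : SimpleGraph V) [DecidableRel G.Adj] (x : V) : ℝ :=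
  (G.degree x : ℝ) / (2 * (G.edgeFinset.card : ℝ))

/-- The uniform `(ℓ∞, 1/4)` mixing time. -/
noncomputable def tmix (G : SimpleGraph V) [DecidableRel G.Adj] : ℕ :=
  sInf {n : ℕ | ∀ x y : V, |lazyProb G n x y / statDist G y - 1| ≤ 1 / 4}

/-- Extension of a finite path to all of `ℕ` (constant after time `N`). -/
def extPath (N : ℕ) (γ : Fin (N + 1) → V) : ℕ → V :=
  fun n => γ ⟨min n N, Nat.lt_succ_of_le (min_le_right n N)⟩

/-- Weight of a finite path under the lazy random walk kernel. -/
noncomputable def pathWeight (G : SimpleGraph V) [DecidableRel G.Adj]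
    (N : ℕ) (γ : Fin (N + 1) → V) : ℝ :=
  ∏ i ∈ Finset.range N, lazyStep G (extPath N γ i) (extPath N γ (i + 1))

open Classical in
/-- Probability, for the lazy random walk started at `ρ`, of a path event
depending only on the first `N+1` coordinates. -/
noncomputable def walkProb (G : SimpleGraph V) [DecidableRel G.Adj]
    (ρ : V) (N : ℕ) (E : (ℕ → V) → Prop) : ℝ :=
  ∑ γ : Fin (N + 1) → V,
    if extPath N γ 0 = ρ ∧ E (extPath N γ) then pathWeight G N γ else 0

open Classical in
/-- Expectation, for the lazy random walk started at `ρ`, of a path functional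
depending only on the first `N+1` coordinates. -/
noncomputable def walkExp (G : SimpleGraph V) [DecidableRel G.Adj]
    (ρ : V) (N : ℕ) (f : (ℕ → V) → ℝ) : ℝ :=
  ∑ γ : Fin (N + 1) → V,
    if extPath N γ 0 = ρ then pathWeight G N γ * f (extPath N γ) else 0

open Classical in
/-- Probability of a path event for the lazy random walk started from `π`. -/
noncomputable def walkProbStat (G : SimpleGraph V) [DecidableRel G.Adj]
    (N : ℕ) (E : (ℕ → V) → Prop) : ℝ :=
  ∑ γ : Fin (N + 1) → V,
    if E (extPath N γ) then statDist G (extPath N γ 0) * pathWeight G N γ else 0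

/-- Expectation of a path functional for the lazy random walk started from `π`. -/
noncomputable def walkExpStat (G : SimpleGraph V) [DecidableRel G.Adj]
    (N : ℕ) (f : (ℕ → V) → ℝ) : ℝ :=
  ∑ γ : Fin (N + 1) → V,
    statDist G (extPath N γ 0) * pathWeight G N γ * f (extPath N γ)

open Classical in
/-- Probability of a joint event for two independent lazy random walks,
each started from the stationary distribution. -/
noncomputable def twoWalkProbStat (G : SimpleGraph V) [DecidableRel G.Adj]
    (N : ℕ) (E : (ℕ → V) → (ℕ → V) → Prop) : ℝ :=
  ∑ γ₁ : Fin (N + 1) → V, ∑ γ₂ : Fin (N + 1) → V,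
    if E (extPath N γ₁) (extPath N γ₂) then
      (statDist G (extPath N γ₁ 0) * pathWeight G N γ₁) *
      (statDist G (extPath N γ₂ 0) * pathWeight G N γ₂) else 0

open Classical in
/-- Probability of a joint event for two independent lazy random walks,
both started at the vertex `ρ`. -/
noncomputable def twoWalkProbFrom (G : SimpleGraph V) [DecidableRel G.Adj]
    (ρ : V) (N : ℕ) (E : (ℕ → V) → (ℕ → V) → Prop) : ℝ :=
  ∑ γ₁ : Fin (N + 1) → V, ∑ γ₂ : Fin (N + 1) → V,
    if extPath N γ₁ 0 = ρ ∧ extPath N γ₂ 0 = ρ ∧ E (extPath N γ₁) (extPath N γ₂) then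
      pathWeight G N γ₁ * pathWeight G N γ₂ else 0

/-- Range of a path over a finite set of times. -/
def walkRange (w : ℕ → V) (A : Finset ℕ) : Finset V := A.image w

/-- `q̄^G(s)`: averaged intersection probability of two independent lazy walks
started at the same (uniform) vertex. -/
noncomputable def qbar (G : SimpleGraph V) [DecidableRel G.Adj] (s : ℕ) : ℝ :=
  (1 / (Fintype.card V : ℝ)) * ∑ ρ : V,
    twoWalkProbFrom G ρ s (fun w₁ w₂ =>
      (walkRange w₁ (Finset.Icc 0 s) ∩ walkRange w₂ (Finset.Icc 1 s)).Nonempty)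

/-- `H^W_ρ(m) = Σ_{i=0}^m Σ_{j=0}^m P_ρ(W(i+j)=ρ)`. -/
noncomputable def HW (G : SimpleGraph V) [DecidableRel G.Adj] (ρ : V) (m : ℕ) : ℝ :=
  ∑ i ∈ Finset.range (m + 1), ∑ j ∈ Finset.range (m + 1), lazyProb G (i + j) ρ ρ


set_option linter.unusedSectionVars false
set_option linter.unusedVariables false
set_option maxHeartbeats 1000000

section Kernel
variable (G : SimpleGraph V) [DecidableRel G.Adj]

lemma lazyStep_nonneg (x y : V) : 0 ≤ lazyStep G x y := by
  unfold lazyStep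
  split_ifs with h1 h2
  · norm_num
  · positivity
  · exact le_refl 0

lemma lazyStep_self (x : V) : lazyStep G x x = 1/2 := by simp [lazyStep]

lemma lazyStep_sum (hdeg : ∀ x : V, 0 < G.degree x) (x : V) :
    ∑ y : V, lazyStep G x y = 1 := by
  have : ∀ y : V, lazyStep G x y =
      (if x = y then (1:ℝ)/2 else 0) + (if y ∈ G.neighborFinset x then 1 / (2 * (G.degree x : ℝ)) else 0) := by
    intro y
    unfold lazyStep
    by_cases h : x = y
    · simp [h, G.irrefl]
    · simp [h, SimpleGraph.mem_neighborFinset]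
  rw [Finset.sum_congr rfl fun y _ => this y, Finset.sum_add_distrib]
  rw [Finset.sum_ite_eq univ x (fun _ => (1:ℝ)/2)]
  rw [Finset.sum_ite_mem, Finset.univ_inter, Finset.sum_const, ← SimpleGraph.degree]
  have hd : (0:ℝ) < (G.degree x : ℝ) := by exact_mod_cast hdeg x
  simp only [nsmul_eq_mul, if_pos (Finset.mem_univ x)]
  field_simp
  ring

lemma lazyStep_symm (d : ℕ) (hreg : G.IsRegularOfDegree d) (x y : V) :
    lazyStep G x y = lazyStep G y x := by
  unfold lazyStep
  by_cases h : x = y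
  · simp [h]
  · have h' : ¬ y = x := fun hh => h hh.symm
    rw [if_neg h, if_neg h']
    by_cases ha : G.Adj x y
    · rw [if_pos ha, if_pos ha.symm, hreg x, hreg y]
    · rw [if_neg ha, if_neg (fun hh => ha hh.symm)]

lemma lazyProb_nonneg (n : ℕ) (x y : V) : 0 ≤ lazyProb G n x y := by
  induction n generalizing x y with
  | zero => simp only [lazyProb]; split_ifs <;> norm_num
  | succ n ih =>
    simp only [lazyProb]
    exact Finset.sum_nonneg fun z _ => mul_nonneg (lazyStep_nonneg G x z) (ih z y)

lemma lazyProb_sum (hdeg : ∀ x : V, 0 < G.degree x) (n : ℕ) (x : V) :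
    ∑ y : V, lazyProb G n x y = 1 := by
  induction n generalizing x with
  | zero => simp [lazyProb]
  | succ n ih =>
    simp only [lazyProb]
    rw [Finset.sum_comm]
    calc ∑ z : V, ∑ y : V, lazyStep G x z * lazyProb G n z y
        = ∑ z : V, lazyStep G x z * ∑ y : V, lazyProb G n z y := by
          simp [Finset.mul_sum]
      _ = 1 := by simp only [ih]; simpa using lazyStep_sum G hdeg x

lemma lazyProb_one (x y : V) : lazyProb G 1 x y = lazyStep G x y := by
  simp only [lazyProb]
  rw [Finset.sum_eq_single y]
  · simp
  · intro z _ hz; simp [lazyProb, hz]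
  · simp

lemma lazyProb_succ_right (n : ℕ) (x y : V) :
    lazyProb G (n + 1) x y = ∑ z : V, lazyProb G n x z * lazyStep G z y := by
  induction n generalizing x y with
  | zero =>
    rw [lazyProb_one]
    rw [Finset.sum_eq_single x]
    · simp [lazyProb]
    · intro z _ hz; simp [lazyProb, Ne.symm hz]
    · simp
  | succ n ih =>
    show (∑ z : V, lazyStep G x z * lazyProb G (n+1) z y) = _
    calc ∑ z : V, lazyStep G x z * lazyProb G (n+1) z y
        = ∑ z : V, lazyStep G x z * ∑ w : V, lazyProb G n z w * lazyStep G w y := by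
          simp only [ih]
      _ = ∑ z : V, ∑ w : V, lazyStep G x z * (lazyProb G n z w * lazyStep G w y) := by
          simp [Finset.mul_sum]
      _ = ∑ w : V, (∑ z : V, lazyStep G x z * lazyProb G n z w) * lazyStep G w y := by
          rw [Finset.sum_comm]; simp [Finset.sum_mul, mul_assoc]
      _ = ∑ w : V, lazyProb G (n+1) x w * lazyStep G w y := rfl

lemma lazyProb_add (m n : ℕ) (x y : V) :
    lazyProb G (m + n) x y = ∑ z : V, lazyProb G m x z * lazyProb G n z y := by
  induction n generalizing y with
  | zero =>
    rw [Nat.add_zero, Finset.sum_eq_single y]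
    · simp [lazyProb]
    · intro z _ hz; simp [lazyProb, hz]
    · simp
  | succ n ih =>
    rw [show m + (n+1) = (m+n)+1 from rfl, lazyProb_succ_right]
    calc ∑ w : V, lazyProb G (m+n) x w * lazyStep G w y
        = ∑ w : V, (∑ z : V, lazyProb G m x z * lazyProb G n z w) * lazyStep G w y := by
          simp only [ih]
      _ = ∑ z : V, ∑ w : V, lazyProb G m x z * (lazyProb G n z w * lazyStep G w y) := by
          rw [Finset.sum_comm]; simp [Finset.sum_mul, mul_assoc]
      _ = ∑ z : V, lazyProb G m x z * lazyProb G (n+1) z y := by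
          simp [Finset.mul_sum, lazyProb_succ_right]

lemma lazyProb_symm (d : ℕ) (hreg : G.IsRegularOfDegree d) (n : ℕ) (x y : V) :
    lazyProb G n x y = lazyProb G n y x := by
  induction n generalizing x y with
  | zero =>
    by_cases h : x = y
    · simp [h]
    · have h' : y ≠ x := fun hh => h hh.symm
      simp [lazyProb, h, h']
  | succ n ih =>
    rw [lazyProb_succ_right G n y x]
    show (∑ z : V, lazyStep G x z * lazyProb G n z y) = _
    apply Finset.sum_congr rfl
    intro z _
    rw [ih, lazyStep_symm G d hreg x z, mul_comm]

lemma lazyProb_col_sum (hdeg : ∀ x : V, 0 < G.degree x) (d : ℕ)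
    (hreg : G.IsRegularOfDegree d) (n : ℕ) (y : V) :
    ∑ z : V, lazyProb G n z y = 1 := by
  calc ∑ z : V, lazyProb G n z y = ∑ z : V, lazyProb G n y z :=
        Finset.sum_congr rfl fun z _ => lazyProb_symm G d hreg n z y
    _ = 1 := lazyProb_sum G hdeg n y

end Kernel

section Mixing
variable (G : SimpleGraph V) [DecidableRel G.Adj]

lemma degree_pos_of_connected (hconn : G.Connected) (hcard : 2 ≤ Fintype.card V) (x : V) :
    0 < G.degree x := by
  obtain ⟨y, hxy⟩ := Fintype.exists_ne_of_one_lt_card (by omega) x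
  obtain ⟨w⟩ := hconn x y
  cases w with
  | nil => exact absurd rfl (Ne.symm hxy)
  | cons h p =>
    rw [G.degree_pos_iff_exists_adj]
    exact ⟨_, h⟩

lemma lazyProb_half_le (n : ℕ) (x y : V) :
    (1/2) * lazyProb G n x y ≤ lazyProb G (n + 1) x y := by
  show _ ≤ ∑ z : V, lazyStep G x z * lazyProb G n z y
  have := Finset.single_le_sum (f := fun z => lazyStep G x z * lazyProb G n z y)
    (fun z _ => mul_nonneg (lazyStep_nonneg G x z) (lazyProb_nonneg G n z y))
    (Finset.mem_univ x)
  simp only [lazyStep_self] at this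
  exact this

lemma lazyProb_pos_of_le (m n : ℕ) (hmn : m ≤ n) (x y : V)
    (h : 0 < lazyProb G m x y) : 0 < lazyProb G n x y := by
  induction n with
  | zero => rwa [Nat.le_zero.mp hmn] at h
  | succ n ih =>
    rcases Nat.lt_or_ge m (n+1) with h' | h'
    · have := ih (by omega)
      calc (0:ℝ) < (1/2) * lazyProb G n x y := by positivity
        _ ≤ _ := lazyProb_half_le G n x y
    · rwa [Nat.le_antisymm hmn h'] at h

lemma lazyProb_pos_walk : ∀ {x y : V} (w : G.Walk x y), 0 < lazyProb G w.length x y := by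
  intro x y w
  induction w with
  | nil => simp [lazyProb]
  | @cons a b c h p ih =>
    show (0:ℝ) < ∑ z : V, lazyStep G a z * lazyProb G p.length z c
    have hterm : (0:ℝ) < lazyStep G a b * lazyProb G p.length b c := by
      apply mul_pos _ ih
      unfold lazyStep
      rw [if_neg h.ne, if_pos h]
      have : 0 < G.degree a := by rw [G.degree_pos_iff_exists_adj]; exact ⟨b, h⟩
      positivity
    calc (0:ℝ) < lazyStep G a b * lazyProb G p.length b c := hterm
      _ ≤ _ := Finset.single_le_sum (f := fun z => lazyStep G a z * lazyProb G p.length z c)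
          (fun z _ => mul_nonneg (lazyStep_nonneg G a z) (lazyProb_nonneg G p.length z c))
          (Finset.mem_univ b)

lemma lazyProb_pos_card (hconn : G.Connected) (x y : V) :
    0 < lazyProb G (Fintype.card V) x y := by
  obtain ⟨w⟩ := hconn x y
  have hp := lazyProb_pos_walk G w.toPath.1
  exact lazyProb_pos_of_le G _ _ (le_of_lt w.toPath.2.length_lt) x y hp

end Mixing

section Mixing2
variable (G : SimpleGraph V) [DecidableRel G.Adj]

lemma statDist_eq (d : ℕ) (hd : 0 < d) (hreg : G.IsRegularOfDegree d) (x : V) :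
    statDist G x = 1 / (Fintype.card V : ℝ) := by
  unfold statDist
  have hsum : ∑ v : V, G.degree v = 2 * G.edgeFinset.card :=
    SimpleGraph.sum_degrees_eq_twice_card_edges G
  have hsum' : Fintype.card V * d = 2 * G.edgeFinset.card := by
    rw [← hsum]
    simp [hreg _, Finset.sum_const, Finset.card_univ, mul_comm]
  have h2 : (2 * (G.edgeFinset.card : ℝ)) = (Fintype.card V : ℝ) * d := by
    exact_mod_cast congrArg (fun n : ℕ => (n : ℝ)) hsum'.symm
  rw [hreg x, h2]
  have hN : (0:ℝ) < Fintype.card V := by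
    have : 0 < Fintype.card V := Fintype.card_pos
    exact_mod_cast this
  have hdR : (0:ℝ) < d := by exact_mod_cast hd
  field_simp

lemma contraction_step (hdeg : ∀ x : V, 0 < G.degree x) (d : ℕ)
    (hreg : G.IsRegularOfDegree d) (ε : ℝ) (n0 : ℕ)
    (hmin : ∀ x y : V, ε ≤ lazyProb G n0 x y) (m : ℕ) (a : ℝ)
    (ha : ∀ z y : V, |lazyProb G m z y - 1 / (Fintype.card V : ℝ)| ≤ a) (x y : V) :
    |lazyProb G (n0 + m) x y - 1 / (Fintype.card V : ℝ)| ≤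
      (1 - ε * (Fintype.card V : ℝ)) * a := by
  set N : ℝ := (Fintype.card V : ℝ) with hN
  have key : lazyProb G (n0 + m) x y - 1 / N
      = ∑ z : V, (lazyProb G n0 x z - ε) * (lazyProb G m z y - 1 / N) := by
    have e1 : ∑ z : V, (lazyProb G n0 x z - ε) * (lazyProb G m z y - 1 / N)
        = (∑ z : V, lazyProb G n0 x z * lazyProb G m z y)
          - (1/N) * (∑ z : V, lazyProb G n0 x z)
          - ε * (∑ z : V, lazyProb G m z y) + (Fintype.card V : ℝ) * (ε * (1/N)) := by
      calc ∑ z : V, (lazyProb G n0 x z - ε) * (lazyProb G m z y - 1 / N)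
          = ∑ z : V, (lazyProb G n0 x z * lazyProb G m z y
              - (1/N) * lazyProb G n0 x z - ε * lazyProb G m z y + ε * (1/N)) :=
            Finset.sum_congr rfl (fun z _ => by ring)
        _ = _ := by
            rw [Finset.sum_add_distrib, Finset.sum_sub_distrib, Finset.sum_sub_distrib,
              ← Finset.mul_sum, ← Finset.mul_sum, Finset.sum_const, Finset.card_univ,
              nsmul_eq_mul]
    rw [e1, ← lazyProb_add, lazyProb_sum G hdeg, lazyProb_col_sum G hdeg d hreg]
    have hNpos : (0:ℝ) < N := by
      rw [hN]
      exact_mod_cast Fintype.card_pos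
    field_simp
    ring
  rw [key]
  have ha0 : 0 ≤ a := le_trans (abs_nonneg _) (ha x y)
  calc |∑ z : V, (lazyProb G n0 x z - ε) * (lazyProb G m z y - 1 / N)|
      ≤ ∑ z : V, |(lazyProb G n0 x z - ε) * (lazyProb G m z y - 1 / N)| :=
        Finset.abs_sum_le_sum_abs _ _
    _ ≤ ∑ z : V, (lazyProb G n0 x z - ε) * a := by
        apply Finset.sum_le_sum
        intro z _
        rw [abs_mul, abs_of_nonneg (by linarith [hmin x z])]
        exact mul_le_mul_of_nonneg_left (ha z y) (by linarith [hmin x z])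
    _ = (1 - ε * N) * a := by
        rw [← Finset.sum_mul, Finset.sum_sub_distrib, lazyProb_sum G hdeg,
          Finset.sum_const, Finset.card_univ, nsmul_eq_mul, hN]
        ring

end Mixing2

section Mixing3
variable (G : SimpleGraph V) [DecidableRel G.Adj]

lemma mixing_set_nonempty (hconn : G.Connected) (hcard : 2 ≤ Fintype.card V)
    (d : ℕ) (hreg : G.IsRegularOfDegree d) :
    {n : ℕ | ∀ x y : V, |lazyProb G n x y / statDist G y - 1| ≤ 1 / 4}.Nonempty := by
  have hdeg : ∀ x : V, 0 < G.degree x := degree_pos_of_connected G hconn hcard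
  have hd : 0 < d := by
    have := hdeg (Classical.arbitrary V)
    rwa [hreg] at this
  set N : ℝ := (Fintype.card V : ℝ) with hNdef
  have hNpos : (0:ℝ) < N := by rw [hNdef]; exact_mod_cast Fintype.card_pos
  set n0 : ℕ := Fintype.card V with hn0
  -- minorization constant
  obtain ⟨p, -, hp⟩ := Finset.exists_min_image (Finset.univ : Finset (V × V))
    (fun p => lazyProb G n0 p.1 p.2) ⟨(Classical.arbitrary V, Classical.arbitrary V),
      Finset.mem_univ _⟩
  set ε : ℝ := lazyProb G n0 p.1 p.2 with hεdef
  have hεpos : 0 < ε := lazyProb_pos_card G hconn p.1 p.2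
  have hmin : ∀ x y : V, ε ≤ lazyProb G n0 x y := fun x y => hp (x, y) (Finset.mem_univ _)
  set θ : ℝ := 1 - ε * N with hθdef
  have hθ0 : 0 ≤ θ := by
    have h1 : ε * N = ∑ _z : V, ε := by
      rw [Finset.sum_const, Finset.card_univ, nsmul_eq_mul, hNdef]; ring
    have h2 : (∑ _z : V, ε) ≤ ∑ z : V, lazyProb G n0 p.1 z :=
      Finset.sum_le_sum (fun z _ => hmin p.1 z)
    rw [lazyProb_sum G hdeg] at h2
    rw [hθdef, h1]
    linarith
  have hθ1 : θ < 1 := by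
    rw [hθdef]
    nlinarith
  -- iterated contraction
  have hiter : ∀ (k : ℕ) (x y : V), |lazyProb G (k * n0) x y - 1 / N| ≤ θ ^ k := by
    intro k
    induction k with
    | zero =>
      intro x y
      simp only [Nat.zero_mul, pow_zero, lazyProb]
      have : (0:ℝ) < 1/N := by positivity
      have hN1 : 1/N ≤ 1 := by
        rw [div_le_one hNpos, hNdef]
        exact_mod_cast Nat.one_le_iff_ne_zero.mpr (Fintype.card_ne_zero)
      split_ifs <;> rw [abs_le] <;> constructor <;> linarith
    | succ k ih =>
      intro x y
      have : (k+1) * n0 = n0 + k * n0 := by ring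
      rw [this, pow_succ, mul_comm (θ^k) θ]
      exact contraction_step G hdeg d hreg ε n0 hmin (k * n0) (θ^k) ih x y
  obtain ⟨k, hk⟩ := exists_pow_lt_of_lt_one (x := 1 / (4 * N)) (by positivity) hθ1
  refine ⟨k * n0, ?_⟩
  intro x y
  rw [statDist_eq G d hd hreg]
  have h1 : lazyProb G (k * n0) x y / (1 / N) - 1 = (lazyProb G (k * n0) x y - 1/N) * N := by
    field_simp
  rw [h1, abs_mul, abs_of_pos hNpos]
  calc |lazyProb G (k * n0) x y - 1/N| * N ≤ θ^k * N :=
        mul_le_mul_of_nonneg_right (hiter k x y) (le_of_lt hNpos)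
    _ ≤ (1 / (4 * N)) * N := mul_le_mul_of_nonneg_right (le_of_lt hk) (le_of_lt hNpos)
    _ = 1 / 4 := by field_simp

lemma lazyProb_le_two_div (hconn : G.Connected) (hcard : 2 ≤ Fintype.card V)
    (d : ℕ) (hreg : G.IsRegularOfDegree d) (k : ℕ) (hk : tmix G ≤ k) (x y : V) :
    lazyProb G k x y ≤ 2 / (Fintype.card V : ℝ) := by
  have hdeg : ∀ x : V, 0 < G.degree x := degree_pos_of_connected G hconn hcard
  have hd : 0 < d := by
    have := hdeg (Classical.arbitrary V)
    rwa [hreg] at this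
  set N : ℝ := (Fintype.card V : ℝ) with hNdef
  have hNpos : (0:ℝ) < N := by rw [hNdef]; exact_mod_cast Fintype.card_pos
  have hmem : tmix G ∈ {n : ℕ | ∀ x y : V, |lazyProb G n x y / statDist G y - 1| ≤ 1 / 4} :=
    Nat.sInf_mem (mixing_set_nonempty G hconn hcard d hreg)
  have hbound : ∀ z w : V, lazyProb G (tmix G) z w ≤ (5/4) * (1/N) := by
    intro z w
    have := hmem z w
    rw [statDist_eq G d hd hreg, ← hNdef] at this
    rw [abs_le] at this
    have h2 := this.2
    rw [div_div_eq_mul_div, div_one] at h2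
    have h3 : lazyProb G (tmix G) z w * N ≤ 5/4 := by linarith
    have h4 : lazyProb G (tmix G) z w ≤ (5/4) / N := (le_div_iff₀ hNpos).mpr h3
    rwa [div_eq_mul_one_div] at h4
  calc lazyProb G k x y = lazyProb G ((k - tmix G) + tmix G) x y := by
        rw [Nat.sub_add_cancel hk]
    _ = ∑ z : V, lazyProb G (k - tmix G) x z * lazyProb G (tmix G) z y := lazyProb_add G _ _ x y
    _ ≤ ∑ z : V, lazyProb G (k - tmix G) x z * ((5/4) * (1/N)) := by
        apply Finset.sum_le_sum
        intro z _
        exact mul_le_mul_of_nonneg_left (hbound z y) (lazyProb_nonneg G _ x z)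
    _ = (5/4) * (1/N) := by
        rw [← Finset.sum_mul, lazyProb_sum G hdeg, one_mul]
    _ ≤ 2 / N := by
        rw [div_eq_mul_one_div 2 N]
        nlinarith [one_div_pos.mpr hNpos]

end Mixing3

section Paths
variable (G : SimpleGraph V) [DecidableRel G.Adj]

lemma extPath_zero (M : ℕ) (γ : Fin (M+1) → V) : extPath M γ 0 = γ 0 := by
  unfold extPath
  congr 1

lemma extPath_cons_zero (M : ℕ) (z : V) (γ : Fin (M+1) → V) :
    extPath (M+1) (Fin.cons z γ) 0 = z := by
  rw [extPath_zero]
  simp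

lemma extPath_cons_succ (M : ℕ) (z : V) (γ : Fin (M+1) → V) (i : ℕ) :
    extPath (M+1) (Fin.cons z γ) (i+1) = extPath M γ i := by
  unfold extPath
  have h1 : (⟨min (i+1) (M+1), Nat.lt_succ_of_le (min_le_right (i+1) (M+1))⟩ : Fin (M+1+1))
      = Fin.succ ⟨min i M, Nat.lt_succ_of_le (min_le_right i M)⟩ := by
    apply Fin.ext
    simp [Fin.val_succ]
  rw [h1, Fin.cons_succ]

lemma pathWeight_nonneg (M : ℕ) (γ : Fin (M+1) → V) : 0 ≤ pathWeight G M γ :=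
  Finset.prod_nonneg fun i _ => lazyStep_nonneg G _ _

lemma pathWeight_cons (M : ℕ) (z : V) (γ : Fin (M+1) → V) :
    pathWeight G (M+1) (Fin.cons z γ) = pathWeight G M γ * lazyStep G z (extPath M γ 0) := by
  unfold pathWeight
  rw [Finset.prod_range_succ']
  congr 1
  · apply Finset.prod_congr rfl
    intro i _
    rw [extPath_cons_succ, extPath_cons_succ]

lemma sumPiCons (M : ℕ) (f : (Fin (M+1+1) → V) → ℝ) :
    ∑ γ : Fin (M+1+1) → V, f γ = ∑ z : V, ∑ γ : Fin (M+1) → V, f (Fin.cons z γ) := by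
  have h := Equiv.sum_comp (Fin.consEquiv (fun _ : Fin (M+1+1) => V)) f
  rw [← h, Fintype.sum_prod_type]
  rfl

lemma sum_indicator_start (M : ℕ) (F : (Fin (M+1) → V) → ℝ) :
    ∑ γ : Fin (M+1) → V, F γ
      = ∑ z : V, ∑ γ : Fin (M+1) → V, (if extPath M γ 0 = z then F γ else 0) := by
  rw [Finset.sum_comm]
  apply Finset.sum_congr rfl
  intro γ _
  simp

lemma walk_mass (hdeg : ∀ x : V, 0 < G.degree x) :
    ∀ (M : ℕ) (x : V),
    (∑ γ : Fin (M+1) → V, if extPath M γ 0 = x then pathWeight G M γ else 0) = 1 := by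
  intro M
  induction M with
  | zero =>
    intro x
    simp only [pathWeight, Finset.range_zero, Finset.prod_empty, extPath_zero]
    rw [← Equiv.sum_comp (Equiv.funUnique (Fin 1) V).symm
      (fun γ : Fin 1 → V => if γ 0 = x then (1:ℝ) else 0)]
    simp
  | succ M ih =>
    intro x
    rw [sumPiCons]
    calc ∑ z : V, ∑ γ : Fin (M+1) → V,
          (if extPath (M+1) (Fin.cons z γ) 0 = x then pathWeight G (M+1) (Fin.cons z γ) else 0)
        = ∑ z : V, ∑ γ : Fin (M+1) → V,
          (if z = x then pathWeight G M γ * lazyStep G z (extPath M γ 0) else 0) := by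
          apply Finset.sum_congr rfl; intro z _
          apply Finset.sum_congr rfl; intro γ _
          rw [extPath_cons_zero, pathWeight_cons]
      _ = ∑ γ : Fin (M+1) → V, pathWeight G M γ * lazyStep G x (extPath M γ 0) := by
          rw [Finset.sum_comm]
          apply Finset.sum_congr rfl; intro γ _
          simp
      _ = 1 := by
          rw [sum_indicator_start (M := M)
            (F := fun γ => pathWeight G M γ * lazyStep G x (extPath M γ 0))]
          calc ∑ z : V, ∑ γ : Fin (M+1) → V,
                (if extPath M γ 0 = z then pathWeight G M γ * lazyStep G x (extPath M γ 0) else 0)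
              = ∑ z : V, lazyStep G x z * ∑ γ : Fin (M+1) → V,
                (if extPath M γ 0 = z then pathWeight G M γ else 0) := by
                apply Finset.sum_congr rfl; intro z _
                rw [Finset.mul_sum]
                apply Finset.sum_congr rfl; intro γ _
                split_ifs with h
                · rw [h]; ring
                · ring
            _ = ∑ z : V, lazyStep G x z := by
                apply Finset.sum_congr rfl; intro z _
                rw [ih z, mul_one]
            _ = 1 := lazyStep_sum G hdeg x

end Paths

section Paths2
variable (G : SimpleGraph V) [DecidableRel G.Adj]

lemma walk_sum_one (hdeg : ∀ x : V, 0 < G.degree x) :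
    ∀ (m M : ℕ), m ≤ M → ∀ (x : V) (g : V → ℝ),
    (∑ γ : Fin (M+1) → V,
      if extPath M γ 0 = x then pathWeight G M γ * g (extPath M γ m) else 0)
      = ∑ y : V, lazyProb G m x y * g y := by
  intro m
  induction m with
  | zero =>
    intro M _ x g
    have h1 : ∀ γ : Fin (M+1) → V,
        (if extPath M γ 0 = x then pathWeight G M γ * g (extPath M γ 0) else 0)
        = g x * (if extPath M γ 0 = x then pathWeight G M γ else 0) := by
      intro γ
      split_ifs with h
      · rw [h]; ring
      · ring
    rw [Finset.sum_congr rfl (fun γ _ => h1 γ), ← Finset.mul_sum, walk_mass G hdeg M x,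
      mul_one]
    rw [Finset.sum_eq_single x]
    · simp [lazyProb]
    · intro z _ hz; simp [lazyProb, Ne.symm hz]
    · simp
  | succ m ih =>
    intro M hm x g
    obtain ⟨M', rfl⟩ : ∃ M', M = M' + 1 := ⟨M - 1, by omega⟩
    rw [sumPiCons]
    calc ∑ z : V, ∑ γ : Fin (M'+1) → V,
          (if extPath (M'+1) (Fin.cons z γ) 0 = x then
            pathWeight G (M'+1) (Fin.cons z γ) * g (extPath (M'+1) (Fin.cons z γ) (m+1)) else 0)
        = ∑ z : V, ∑ γ : Fin (M'+1) → V,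
          (if z = x then
            (pathWeight G M' γ * lazyStep G z (extPath M' γ 0)) * g (extPath M' γ m) else 0) := by
          apply Finset.sum_congr rfl; intro z _
          apply Finset.sum_congr rfl; intro γ _
          rw [extPath_cons_zero, pathWeight_cons, extPath_cons_succ]
      _ = ∑ γ : Fin (M'+1) → V,
            (pathWeight G M' γ * lazyStep G x (extPath M' γ 0)) * g (extPath M' γ m) := by
          rw [Finset.sum_comm]
          apply Finset.sum_congr rfl; intro γ _
          simp
      _ = ∑ z : V, lazyStep G x z * ∑ γ : Fin (M'+1) → V,
            (if extPath M' γ 0 = z then pathWeight G M' γ * g (extPath M' γ m) else 0) := by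
          rw [sum_indicator_start (M := M')
            (F := fun γ => (pathWeight G M' γ * lazyStep G x (extPath M' γ 0)) * g (extPath M' γ m))]
          apply Finset.sum_congr rfl; intro z _
          rw [Finset.mul_sum]
          apply Finset.sum_congr rfl; intro γ _
          split_ifs with h
          · rw [h]; ring
          · ring
      _ = ∑ z : V, lazyStep G x z * ∑ y : V, lazyProb G m z y * g y := by
          apply Finset.sum_congr rfl; intro z _
          rw [ih M' (by omega) z g]
      _ = ∑ y : V, lazyProb G (m+1) x y * g y := by
          have h2 : ∀ y : V, lazyProb G (m+1) x y * g y
              = ∑ z : V, lazyStep G x z * (lazyProb G m z y * g y) := by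
            intro y
            show (∑ z : V, lazyStep G x z * lazyProb G m z y) * g y = _
            rw [Finset.sum_mul]
            exact Finset.sum_congr rfl fun z _ => by ring
          simp only [h2, Finset.mul_sum]
          rw [Finset.sum_comm]

lemma walk_sum_two (hdeg : ∀ x : V, 0 < G.degree x) :
    ∀ (n k M : ℕ), n + k ≤ M → ∀ (x : V) (g : V → V → ℝ),
    (∑ γ : Fin (M+1) → V,
      if extPath M γ 0 = x then
        pathWeight G M γ * g (extPath M γ n) (extPath M γ (n+k)) else 0)
      = ∑ y : V, ∑ z : V, lazyProb G n x y * (lazyProb G k y z * g y z) := by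
  intro n
  induction n with
  | zero =>
    intro k M hk x g
    have h1 : ∀ γ : Fin (M+1) → V,
        (if extPath M γ 0 = x then
          pathWeight G M γ * g (extPath M γ 0) (extPath M γ (0+k)) else 0)
        = (if extPath M γ 0 = x then pathWeight G M γ * g x (extPath M γ k) else 0) := by
      intro γ
      split_ifs with h
      · rw [h, Nat.zero_add]
      · rfl
    rw [Finset.sum_congr rfl (fun γ _ => h1 γ), walk_sum_one G hdeg k M (by omega) x (g x)]
    symm
    rw [Finset.sum_eq_single x]
    · apply Finset.sum_congr rfl; intro z _; simp [lazyProb]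
    · intro y _ hy
      apply Finset.sum_eq_zero; intro z _
      simp [lazyProb, Ne.symm hy]
    · simp
  | succ n ih =>
    intro k M hk x g
    obtain ⟨M', rfl⟩ : ∃ M', M = M' + 1 := ⟨M - 1, by omega⟩
    rw [sumPiCons]
    calc ∑ z : V, ∑ γ : Fin (M'+1) → V,
          (if extPath (M'+1) (Fin.cons z γ) 0 = x then
            pathWeight G (M'+1) (Fin.cons z γ) *
              g (extPath (M'+1) (Fin.cons z γ) (n+1)) (extPath (M'+1) (Fin.cons z γ) (n+1+k)) else 0)
        = ∑ z : V, ∑ γ : Fin (M'+1) → V,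
          (if z = x then
            (pathWeight G M' γ * lazyStep G z (extPath M' γ 0)) *
              g (extPath M' γ n) (extPath M' γ (n+k)) else 0) := by
          apply Finset.sum_congr rfl; intro z _
          apply Finset.sum_congr rfl; intro γ _
          rw [extPath_cons_zero, pathWeight_cons, extPath_cons_succ,
            show n+1+k = (n+k)+1 by ring, extPath_cons_succ]
      _ = ∑ γ : Fin (M'+1) → V,
            (pathWeight G M' γ * lazyStep G x (extPath M' γ 0)) *
              g (extPath M' γ n) (extPath M' γ (n+k)) := by
          rw [Finset.sum_comm]
          apply Finset.sum_congr rfl; intro γ _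
          simp
      _ = ∑ w : V, lazyStep G x w * ∑ γ : Fin (M'+1) → V,
            (if extPath M' γ 0 = w then
              pathWeight G M' γ * g (extPath M' γ n) (extPath M' γ (n+k)) else 0) := by
          rw [sum_indicator_start (M := M')
            (F := fun γ => (pathWeight G M' γ * lazyStep G x (extPath M' γ 0)) *
              g (extPath M' γ n) (extPath M' γ (n+k)))]
          apply Finset.sum_congr rfl; intro w _
          rw [Finset.mul_sum]
          apply Finset.sum_congr rfl; intro γ _
          split_ifs with h
          · rw [h]; ring
          · ring
      _ = ∑ w : V, lazyStep G x w *
            ∑ y : V, ∑ z : V, lazyProb G n w y * (lazyProb G k y z * g y z) := by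
          apply Finset.sum_congr rfl; intro w _
          rw [ih k M' (by omega) w g]
      _ = ∑ y : V, ∑ z : V, lazyProb G (n+1) x y * (lazyProb G k y z * g y z) := by
          have h2 : ∀ y z : V, lazyProb G (n+1) x y * (lazyProb G k y z * g y z)
              = ∑ w : V, lazyStep G x w * (lazyProb G n w y * (lazyProb G k y z * g y z)) := by
            intro y z
            show (∑ w : V, lazyStep G x w * lazyProb G n w y) * (lazyProb G k y z * g y z) = _
            rw [Finset.sum_mul]
            exact Finset.sum_congr rfl fun w _ => by ring
          simp only [h2, Finset.mul_sum]
          rw [Finset.sum_comm]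
          apply Finset.sum_congr rfl; intro y _
          rw [Finset.sum_comm]

end Paths2

/-- Separation of short and long loops: no loops of intermediate length. -/
theorem no_loops_of_intermediate_length
    (G : SimpleGraph V) [DecidableRel G.Adj] (hconn : G.Connected)
    (hcard : 2 ≤ Fintype.card V) (d : ℕ) (hreg : G.IsRegularOfDegree d)
    (s' r N : ℕ) (hr : s' + 1 ≤ r) (hs' : tmix G + 1 ≤ s') (ρ : V) :
    1 - 2 * ((r - s' + 1 : ℕ) : ℝ) * ((N : ℝ) + 1) / (Fintype.card V : ℝ) ≤
      walkProb G ρ (N + r) (fun w =>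
        ∀ n ≤ N, w n ∉ walkRange w (Finset.Icc (n + s') (n + r))) := by
  classical
  have hdeg : ∀ x : V, 0 < G.degree x := degree_pos_of_connected G hconn hcard
  set M : ℕ := N + r with hM
  set E : (ℕ → V) → Prop :=
    fun w => ∀ n ≤ N, w n ∉ walkRange w (Finset.Icc (n + s') (n + r)) with hE
  set Nc : ℝ := (Fintype.card V : ℝ) with hNc
  have hNpos : (0:ℝ) < Nc := by rw [hNc]; exact_mod_cast Fintype.card_pos
  -- complement decomposition
  have hsplit : walkProb G ρ M E + walkProb G ρ M (fun w => ¬ E w) = 1 := by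
    unfold walkProb
    rw [← Finset.sum_add_distrib]
    rw [show (1:ℝ) = ∑ γ : Fin (M+1) → V,
      (if extPath M γ 0 = ρ then pathWeight G M γ else 0) from (walk_mass G hdeg M ρ).symm]
    apply Finset.sum_congr rfl
    intro γ _
    by_cases h1 : extPath M γ 0 = ρ
    · by_cases h2 : E (extPath M γ)
      · rw [if_pos ⟨h1, h2⟩, if_neg (fun hc => hc.2 h2), if_pos h1, add_zero]
      · rw [if_neg (fun hc => h2 hc.2), if_pos ⟨h1, h2⟩, if_pos h1, zero_add]
    · rw [if_neg (fun hc => h1 hc.1), if_neg (fun hc => h1 hc.1), if_neg h1, add_zero]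
  -- single loop event bound
  have hloop : ∀ n k : ℕ, n ≤ N → k ∈ Finset.Icc s' r →
      walkProb G ρ M (fun w => w n = w (n+k)) ≤ 2 / Nc := by
    intro n k hn hk
    rw [Finset.mem_Icc] at hk
    have hnk : n + k ≤ M := by omega
    have heq : walkProb G ρ M (fun w => w n = w (n+k))
        = ∑ y : V, ∑ z : V, lazyProb G n ρ y *
            (lazyProb G k y z * (if y = z then (1:ℝ) else 0)) := by
      rw [← walk_sum_two G hdeg n k M hnk ρ (fun y z => if y = z then (1:ℝ) else 0)]
      unfold walkProb
      apply Finset.sum_congr rfl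
      intro γ _
      by_cases h1 : extPath M γ 0 = ρ
      · by_cases h2 : extPath M γ n = extPath M γ (n+k) <;> simp [h1, h2]
      · simp [h1]
    have heq2 : walkProb G ρ M (fun w => w n = w (n+k))
        = ∑ y : V, lazyProb G n ρ y * lazyProb G k y y := by
      rw [heq]
      apply Finset.sum_congr rfl
      intro y _
      rw [Finset.sum_eq_single y]
      · simp
      · intro z _ hz
        simp [Ne.symm hz]
      · simp
    rw [heq2]
    have hky : ∀ y : V, lazyProb G k y y ≤ 2 / Nc := by
      intro y
      exact lazyProb_le_two_div G hconn hcard d hreg k (by omega) y y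
    calc ∑ y : V, lazyProb G n ρ y * lazyProb G k y y
        ≤ ∑ y : V, lazyProb G n ρ y * (2 / Nc) := by
          apply Finset.sum_le_sum
          intro y _
          exact mul_le_mul_of_nonneg_left (hky y) (lazyProb_nonneg G n ρ y)
      _ = 2 / Nc := by rw [← Finset.sum_mul, lazyProb_sum G hdeg, one_mul]
  -- union bound
  have hunion : walkProb G ρ M (fun w => ¬ E w)
      ≤ ∑ n ∈ Finset.range (N+1), ∑ k ∈ Finset.Icc s' r,
          walkProb G ρ M (fun w => w n = w (n+k)) := by
    have hswap : ∑ n ∈ Finset.range (N+1), ∑ k ∈ Finset.Icc s' r,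
        (∑ γ : Fin (M+1) → V,
          if extPath M γ 0 = ρ ∧ extPath M γ n = extPath M γ (n+k)
            then pathWeight G M γ else 0)
        = ∑ γ : Fin (M+1) → V, ∑ n ∈ Finset.range (N+1), ∑ k ∈ Finset.Icc s' r,
          (if extPath M γ 0 = ρ ∧ extPath M γ n = extPath M γ (n+k)
            then pathWeight G M γ else 0) := by
      rw [Finset.sum_congr rfl (fun n _ => Finset.sum_comm), Finset.sum_comm]
    have hpoint : ∀ γ : Fin (M+1) → V,
        (if extPath M γ 0 = ρ ∧ ¬ E (extPath M γ) then pathWeight G M γ else 0)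
        ≤ ∑ n ∈ Finset.range (N+1), ∑ k ∈ Finset.Icc s' r,
          (if extPath M γ 0 = ρ ∧ extPath M γ n = extPath M γ (n+k)
            then pathWeight G M γ else 0) := by
      intro γ
      have hnonneg : ∀ n' k' : ℕ, (0:ℝ) ≤ (if extPath M γ 0 = ρ ∧ extPath M γ n' = extPath M γ (n'+k')
          then pathWeight G M γ else 0) := by
        intro n' k'
        split_ifs
        · exact pathWeight_nonneg G M γ
        · exact le_refl 0
      by_cases h : extPath M γ 0 = ρ ∧ ¬ E (extPath M γ)
      · obtain ⟨h1, h2⟩ := h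
        have h2' := h2
        obtain ⟨n, hn, hmem⟩ : ∃ n, n ≤ N ∧
            extPath M γ n ∈ walkRange (extPath M γ) (Finset.Icc (n + s') (n + r)) := by
          by_contra hc
          push_neg at hc
          exact h2 (fun n hn => hc n hn)
        rw [walkRange, Finset.mem_image] at hmem
        obtain ⟨m, hm, hw⟩ := hmem
        rw [Finset.mem_Icc] at hm
        set k : ℕ := m - n with hk
        have hkmem : k ∈ Finset.Icc s' r := Finset.mem_Icc.mpr ⟨by omega, by omega⟩
        have hnk : n + k = m := by omega
        calc (if extPath M γ 0 = ρ ∧ ¬ E (extPath M γ) then pathWeight G M γ else 0)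
            = pathWeight G M γ := if_pos ⟨h1, h2'⟩
          _ = (if extPath M γ 0 = ρ ∧ extPath M γ n = extPath M γ (n+k)
                then pathWeight G M γ else 0) :=
              (if_pos ⟨h1, by rw [hnk]; exact hw.symm⟩).symm
          _ ≤ ∑ k' ∈ Finset.Icc s' r,
                (if extPath M γ 0 = ρ ∧ extPath M γ n = extPath M γ (n+k')
                  then pathWeight G M γ else 0) :=
              Finset.single_le_sum (fun k' _ => hnonneg n k') hkmem
          _ ≤ ∑ n' ∈ Finset.range (N+1), ∑ k' ∈ Finset.Icc s' r,
                (if extPath M γ 0 = ρ ∧ extPath M γ n' = extPath M γ (n'+k')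
                  then pathWeight G M γ else 0) := by
              apply Finset.single_le_sum
                (f := fun n' => ∑ k' ∈ Finset.Icc s' r,
                  (if extPath M γ 0 = ρ ∧ extPath M γ n' = extPath M γ (n'+k')
                    then pathWeight G M γ else 0))
                (fun n' _ => Finset.sum_nonneg (fun k' _ => hnonneg n' k'))
              exact Finset.mem_range.mpr (by omega)
      · rw [if_neg h]
        apply Finset.sum_nonneg
        intro n' _
        apply Finset.sum_nonneg
        intro k' _
        exact hnonneg n' k'
    calc walkProb G ρ M (fun w => ¬ E w)
        = ∑ γ : Fin (M+1) → V,
            (if extPath M γ 0 = ρ ∧ ¬ E (extPath M γ) then pathWeight G M γ else 0) := by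
          unfold walkProb
          refine Finset.sum_congr rfl fun γ _ => ?_
          congr 1
      _ ≤ ∑ γ : Fin (M+1) → V, ∑ n ∈ Finset.range (N+1), ∑ k ∈ Finset.Icc s' r,
            (if extPath M γ 0 = ρ ∧ extPath M γ n = extPath M γ (n+k)
              then pathWeight G M γ else 0) :=
          Finset.sum_le_sum (fun γ _ => hpoint γ)
      _ = ∑ n ∈ Finset.range (N+1), ∑ k ∈ Finset.Icc s' r,
            (∑ γ : Fin (M+1) → V,
            (if extPath M γ 0 = ρ ∧ extPath M γ n = extPath M γ (n+k)
              then pathWeight G M γ else 0)) := hswap.symm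
      _ = ∑ n ∈ Finset.range (N+1), ∑ k ∈ Finset.Icc s' r,
            walkProb G ρ M (fun w => w n = w (n+k)) := by
          unfold walkProb
          apply Finset.sum_congr rfl; intro n _
          apply Finset.sum_congr rfl; intro k _
          refine Finset.sum_congr rfl fun γ _ => ?_
          congr 1
  -- assemble
  have hsum : ∑ n ∈ Finset.range (N+1), ∑ k ∈ Finset.Icc s' r,
      walkProb G ρ M (fun w => w n = w (n+k))
      ≤ ((N:ℝ) + 1) * (((r - s' + 1 : ℕ)) : ℝ) * (2 / Nc) := by
    have hcardIcc : (Finset.Icc s' r).card = r - s' + 1 := by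
      rw [Nat.card_Icc]; omega
    calc ∑ n ∈ Finset.range (N+1), ∑ k ∈ Finset.Icc s' r,
          walkProb G ρ M (fun w => w n = w (n+k))
        ≤ ∑ n ∈ Finset.range (N+1), ∑ _k ∈ Finset.Icc s' r, (2 / Nc) := by
          apply Finset.sum_le_sum
          intro n hn
          apply Finset.sum_le_sum
          intro k hk
          exact hloop n k (by have := Finset.mem_range.mp hn; omega) hk
      _ = ((N:ℝ) + 1) * (((r - s' + 1 : ℕ)) : ℝ) * (2 / Nc) := by
          simp only [Finset.sum_const, hcardIcc, Finset.card_range, nsmul_eq_mul]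
          push_cast
          ring
  have hfinal : walkProb G ρ M (fun w => ¬ E w)
      ≤ ((N:ℝ) + 1) * (((r - s' + 1 : ℕ)) : ℝ) * (2 / Nc) := le_trans hunion hsum
  have : walkProb G ρ M E = 1 - walkProb G ρ M (fun w => ¬ E w) := by linarith
  rw [this]
  have harith : 2 * ((r - s' + 1 : ℕ) : ℝ) * ((N : ℝ) + 1) / Nc
      = ((N:ℝ) + 1) * (((r - s' + 1 : ℕ)) : ℝ) * (2 / Nc) := by
    field_simp
  linarith
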